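/- If t ≥ 0 satisfies r_t = 1 (i.e., t ≡ 1 mod (n−1)), then L_t consists of the single basis element (Λ, n) where Λ has λ_1 = t + 1 and no other parts (i.e., x_1^{t+1} ∂_n). -/
import Mathlib


/-- Weight of a partition (finitely supported sequence of multiplicities). -/
def wt (Λ : ℕ →₀ ℕ) : ℕ := Λ.sum fun m c => m * c

/-- Degree (number of parts, with multiplicity) of a partition. -/
def deg (Λ : ℕ →₀ ℕ) : ℕ := Λ.sum fun _ c => c

/-- Basis element of the integral Lie ring of partitions: a pair (Λ, k) with
1 ≤ k ≤ n and all parts of Λ in {1,…,k-1}. -/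
def IsBasisElt (n : ℕ) (Λ : ℕ →₀ ℕ) (k : ℕ) : Prop :=
  1 ≤ k ∧ k ≤ n ∧ Λ 0 = 0 ∧ ∀ m, k ≤ m → Λ m = 0

/-- The weight-degree function. -/
def WD (n : ℕ) (Λ : ℕ →₀ ℕ) (k : ℕ) : ℤ :=
  (wt Λ : ℤ) - (deg Λ : ℤ) + (n : ℤ) - (k : ℤ)

/-- h_i = ⌊(i-1)/(n-1)⌋ + 1. -/
def hh (n : ℕ) (i : ℤ) : ℤ := (i - 1).fdiv ((n : ℤ) - 1) + 1

/-- r_i = i - (h_i - 1)(n-1). -/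
def rr (n : ℕ) (i : ℤ) : ℤ := i - (hh n i - 1) * ((n : ℤ) - 1)

/-- The i-th level function lev_i(Λ,k) = h_i·WD(Λ,k) + deg(Λ) - 1. -/
def lev (n : ℕ) (i : ℤ) (Λ : ℕ →₀ ℕ) (k : ℕ) : ℤ :=
  hh n i * WD n Λ k + (deg Λ : ℤ) - 1

/-- N_i = set of basis elements with lev_j ≤ j for some -1 ≤ j ≤ i. -/
def Nset (n : ℕ) (i : ℤ) : Set ((ℕ →₀ ℕ) × ℕ) :=
  {p | IsBasisElt n p.1 p.2 ∧ ∃ j : ℤ, -1 ≤ j ∧ j ≤ i ∧ lev n j p.1 p.2 ≤ j}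

/-- L_i = set of basis elements for which i is the least index j ≥ -1 with lev_j = j. -/
def Lset (n : ℕ) (i : ℤ) : Set ((ℕ →₀ ℕ) × ℕ) :=
  {p | IsBasisElt n p.1 p.2 ∧ lev n i p.1 p.2 = i ∧
    ∀ j : ℤ, -1 ≤ j → lev n j p.1 p.2 = j → i ≤ j}

/-- The partition function p(s). -/
def pfun (s : ℕ) : ℕ := Fintype.card (Nat.Partition s)

/-- b_m = Σ_{s=0}^m p(s). -/
def bnat (m : ℕ) : ℕ := ∑ s ∈ Finset.range (m + 1), pfun s

/-- c_m = Σ_{s=0}^m b_s. -/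
def cnat (m : ℕ) : ℕ := ∑ s ∈ Finset.range (m + 1), bnat s

/-- b extended to ℤ, with b_m = 0 for m < 0. -/
def bint (m : ℤ) : ℕ := if m < 0 then 0 else bnat m.toNat

/-- The period map per(Λ,k) = (Λ + (n-1-WD(Λ,k))·e₁, k). -/
noncomputable def per (n : ℕ) (p : (ℕ →₀ ℕ) × ℕ) : (ℕ →₀ ℕ) × ℕ :=
  (p.1 + Finsupp.single 1 (((n : ℤ) - 1 - WD n p.1 p.2).toNat), p.2)


lemma wt_single (c : ℕ) : wt (Finsupp.single 1 c) = c := by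
  unfold wt
  rw [Finsupp.sum_single_index] <;> simp

lemma deg_single (m c : ℕ) : deg (Finsupp.single m c) = c := by
  unfold deg
  exact Finsupp.sum_single_index rfl

lemma deg_le_wt (Λ : ℕ →₀ ℕ) (h0 : Λ 0 = 0) : deg Λ ≤ wt Λ := by
  unfold deg wt Finsupp.sum
  apply Finset.sum_le_sum
  intro m hm
  have hm0 : m ≠ 0 := by
    intro h; rw [h] at hm; exact (Finsupp.mem_support_iff.mp hm) h0
  calc Λ m = 1 * Λ m := (one_mul _).symm
    _ ≤ m * Λ m := Nat.mul_le_mul_right _ (Nat.one_le_iff_ne_zero.mpr hm0)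

lemma eq_single_of_wt_eq_deg (Λ : ℕ →₀ ℕ) (h0 : Λ 0 = 0) (hwd : wt Λ = deg Λ) :
    Λ = Finsupp.single 1 (Λ 1) := by
  ext m
  rcases eq_or_ne m 1 with rfl | hm1
  · simp
  rw [Finsupp.single_apply, if_neg (Ne.symm hm1)]
  by_contra hc
  have hm : m ∈ Λ.support := Finsupp.mem_support_iff.mpr hc
  have hm0 : m ≠ 0 := by intro h; rw [h] at hc; exact hc h0
  have hlt : deg Λ < wt Λ := by
    unfold deg wt Finsupp.sum
    apply Finset.sum_lt_sum
    · intro i hi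
      have hi0 : i ≠ 0 := by
        intro h; rw [h] at hi; exact (Finsupp.mem_support_iff.mp hi) h0
      calc Λ i = 1 * Λ i := (one_mul _).symm
        _ ≤ i * Λ i := Nat.mul_le_mul_right _ (Nat.one_le_iff_ne_zero.mpr hi0)
    · refine ⟨m, hm, ?_⟩
      have h2 : 2 ≤ m := by omega
      calc Λ m = 1 * Λ m := (one_mul _).symm
        _ < m * Λ m := by
            apply Nat.mul_lt_mul_of_lt_of_le (by omega) (le_refl _) (by omega)
  omega

lemma hh_formula (n : ℕ) (hn : 3 ≤ n) (h r : ℤ) (h1 : 1 ≤ r) (h2 : r ≤ (n : ℤ) - 1) :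
    hh n ((h - 1) * ((n : ℤ) - 1) + r) = h := by
  unfold hh
  have e : (h - 1) * ((n : ℤ) - 1) + r - 1 = (r - 1) + (h - 1) * ((n : ℤ) - 1) := by ring
  have hn1 : (0 : ℤ) ≤ (n : ℤ) - 1 := by
    have : (3 : ℤ) ≤ (n : ℤ) := by exact_mod_cast hn
    omega
  have hn2 : ((n : ℤ) - 1) ≠ 0 := by
    have : (3 : ℤ) ≤ (n : ℤ) := by exact_mod_cast hn
    omega
  rw [e, Int.fdiv_eq_ediv_of_nonneg _ hn1, Int.add_mul_ediv_right _ _ hn2,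
    Int.ediv_eq_zero_of_lt (by omega) (by omega)]
  ring

set_option maxHeartbeats 1000000 in
theorem stmt9 (n : ℕ) (hn : 3 ≤ n) (t : ℤ) (ht : 0 ≤ t) (hr : rr n t = 1) :
    Lset n t = {(Finsupp.single 1 (t.toNat + 1), n)} := by
  have hn3 : (3 : ℤ) ≤ (n : ℤ) := by exact_mod_cast hn
  ext p
  obtain ⟨Λ, k⟩ := p
  simp only [Lset, Set.mem_setOf_eq, Set.mem_singleton_iff, Prod.mk.injEq]
  have httoNat : ((t.toNat : ℤ)) = t := Int.toNat_of_nonneg ht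
  constructor
  · rintro ⟨⟨hk1, hkn, h0, hbig⟩, hlev, hmin⟩
    set H := hh n t with hH
    have ht1 : t = (H - 1) * ((n : ℤ) - 1) + 1 := by
      unfold rr at hr
      rw [← hH] at hr
      omega
    have hHpos : 1 ≤ H := by nlinarith
    have ht1' : 1 ≤ t := by nlinarith
    have hdw := deg_le_wt Λ h0
    have hdwZ : (deg Λ : ℤ) ≤ (wt Λ : ℤ) := by exact_mod_cast hdw
    have hknZ : (k : ℤ) ≤ (n : ℤ) := by exact_mod_cast hkn
    have hWDge : 0 ≤ WD n Λ k := by unfold WD; omega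
    have hhm1 : hh n (-1 : ℤ) = 0 := by
      have := hh_formula n hn 0 ((n : ℤ) - 2) (by omega) (by omega)
      rw [show ((0 : ℤ) - 1) * ((n : ℤ) - 1) + ((n : ℤ) - 2) = -1 by ring] at this
      exact this
    have hdpos : 1 ≤ deg Λ := by
      by_contra hd
      have hd0 : deg Λ = 0 := by omega
      have : lev n (-1) Λ k = -1 := by
        unfold lev
        rw [hhm1, hd0]
        ring
      have := hmin (-1) (le_refl _) this
      omega
    have hdZ : (1 : ℤ) ≤ (deg Λ : ℤ) := by exact_mod_cast hdpos
    set w := WD n Λ k with hw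
    have hwle : w ≤ 0 := by
      by_contra hwpos
      push_neg at hwpos
      have hw1 : 1 ≤ w := hwpos
      have hkey : H * ((n : ℤ) - 1 - w) = (n : ℤ) + (deg Λ : ℤ) - 3 := by
        unfold lev at hlev
        rw [← hH, ← hw] at hlev
        linear_combination -hlev - ht1
      have hS : 1 ≤ (n : ℤ) - 1 - w := by
        by_contra hc
        push_neg at hc
        have h2 : H * ((n : ℤ) - 1 - w) ≤ 0 :=
          mul_nonpos_iff.mpr (Or.inl ⟨by omega, by omega⟩)
        linarith [hkey]
      set h' := H - 1 with hh'
      set j' := h' * w + (deg Λ : ℤ) - 1 with hj'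
      have hkey' : h' * ((n : ℤ) - 1 - w) = (deg Λ : ℤ) - 2 + w := by
        rw [hh']; linear_combination hkey
      have hjform : j' = (h' - 1) * ((n : ℤ) - 1) + ((n : ℤ) - w) := by
        rw [hj']; linear_combination -hkey' 
      have hhj' : hh n j' = h' := by
        rw [hjform]
        exact hh_formula n hn h' ((n : ℤ) - w) (by omega) (by omega)
      have hlevj : lev n j' Λ k = j' := by
        unfold lev
        rw [hhj', ← hw, hj']
      have hj'ge : -1 ≤ j' := by
        have : 0 ≤ h' * w := mul_nonneg (by omega) (by omega)
        omega
      have := hmin j' hj'ge hlevj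
      have hjlt : j' < t := by
        have e1 : t = h' * ((n : ℤ) - 1) + 1 := by rw [hh']; linarith [ht1]
        have e2 : j' = h' * ((n : ℤ) - 1) + 1 - w := by
          rw [hjform]; ring
        omega
      omega
    have hw0 : w = 0 := le_antisymm hwle hWDge
    have hWD0 : (wt Λ : ℤ) - (deg Λ : ℤ) + (n : ℤ) - (k : ℤ) = 0 := hw0
    have hwteq : wt Λ = deg Λ := by omega
    have hkeq : k = n := by omega
    have hdegt : (deg Λ : ℤ) = t + 1 := by
      unfold lev at hlev
      rw [← hw, hw0] at hlev
      omega
    have hΛ : Λ = Finsupp.single 1 (Λ 1) := eq_single_of_wt_eq_deg Λ h0 hwteq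
    have hdeg1 : deg Λ = Λ 1 := by
      conv_lhs => rw [hΛ]
      exact deg_single 1 (Λ 1)
    have hΛ1 : Λ 1 = t.toNat + 1 := by omega
    constructor
    · rw [hΛ, hΛ1]
    · exact hkeq
  · rintro ⟨hΛ, hk⟩
    subst hΛ
    rw [hk]
    have h0 : (Finsupp.single 1 (t.toNat + 1) : ℕ →₀ ℕ) 0 = 0 := by
      rw [Finsupp.single_apply, if_neg (by omega)]
    have hWD0 : WD n (Finsupp.single 1 (t.toNat + 1)) n = 0 := by
      unfold WD
      rw [wt_single, deg_single]
      ring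
    have hlevall : ∀ j : ℤ, lev n j (Finsupp.single 1 (t.toNat + 1)) n = t := by
      intro j
      unfold lev
      rw [hWD0, deg_single]
      push_cast [httoNat]
      ring
    refine ⟨⟨by omega, le_refl _, h0, ?_⟩, hlevall t, ?_⟩
    · intro m hm
      rw [Finsupp.single_apply, if_neg (by omega)]
    · intro j hj hlevj
      rw [hlevall j] at hlevj
      omega
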